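/- arXiv:2006.05833 — 4 statements merged into one kernel-verified Lean document; each statement's English description precedes it below -/
import Mathlib

section
/- Let x', x, l_2, ..., l_{τ−1}, x_1, ..., x_κ ∈ {0,1} with τ ≥ 2 and κ ≥ 1. Then the inequalities ((τ−1)κ + 1)·x' − κ·(x + Σ_{i=2}^{τ−1} l_i) − Σ_{i=1}^κ x_i + κ − 1 ≥ 0 and −κ·x' + κ·(x + Σ_{i=2}^{τ−1} l_i) + Σ_{i=1}^κ x_i ≥ 0 hold simultaneously if and only if (x' = 1 ↔ (at least one of x, l_2, ..., l_{τ−1} equals 1, or all of x_1, ..., x_κ equal 1)). -/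
lemma sum01_nonneg {n : ℕ} (f : Fin n → ℤ) (h : ∀ i, f i = 0 ∨ f i = 1) :
    0 ≤ ∑ i, f i :=
  Finset.sum_nonneg (fun i _ => by rcases h i with h|h <;> omega)

lemma sum01_le {n : ℕ} (f : Fin n → ℤ) (h : ∀ i, f i = 0 ∨ f i = 1) :
    ∑ i, f i ≤ n := by
  calc ∑ i, f i ≤ ∑ _i : Fin n, (1:ℤ) :=
        Finset.sum_le_sum (fun i _ => by rcases h i with h|h <;> omega)
    _ = n := by simp

lemma sum01_pos_iff {n : ℕ} (f : Fin n → ℤ) (h : ∀ i, f i = 0 ∨ f i = 1) :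
    1 ≤ ∑ i, f i ↔ ∃ i, f i = 1 := by
  constructor
  · intro hs
    by_contra hc
    push_neg at hc
    have : ∑ i, f i = 0 := Finset.sum_eq_zero (fun i _ => by rcases h i with h|h; exact h; exact absurd h (hc i))
    omega
  · rintro ⟨i, hi⟩
    calc (1:ℤ) = f i := hi.symm
      _ ≤ ∑ j, f j := Finset.single_le_sum (fun j _ => by rcases h j with h|h <;> omega) (Finset.mem_univ i)

lemma sum01_eq_card_iff {n : ℕ} (f : Fin n → ℤ) (h : ∀ i, f i = 0 ∨ f i = 1) :
    (n:ℤ) ≤ ∑ i, f i ↔ ∀ i, f i = 1 := by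
  constructor
  · intro hs
    by_contra hc
    push_neg at hc
    obtain ⟨i, hi⟩ := hc
    have h0 : f i = 0 := by rcases h i with h|h; exact h; exact absurd h hi
    have hlt : ∑ j, f j < ∑ _j : Fin n, (1:ℤ) := by
      apply Finset.sum_lt_sum (fun j _ => by rcases h j with h|h <;> omega)
      exact ⟨i, Finset.mem_univ i, by omega⟩
    simp at hlt
    omega
  · intro hall
    have : ∑ i, f i = ∑ _i : Fin n, (1:ℤ) := Finset.sum_congr rfl (fun i _ => hall i)
    simp [this]

theorem stmt_2 (τ κ : ℕ) (hτ : 2 ≤ τ) (hκ : 1 ≤ κ)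
    (x' x : ℤ) (l : Fin (τ - 2) → ℤ) (xs : Fin κ → ℤ)
    (hx' : x' = 0 ∨ x' = 1) (hx : x = 0 ∨ x = 1)
    (hl : ∀ i, l i = 0 ∨ l i = 1) (hxs : ∀ j, xs j = 0 ∨ xs j = 1) :
    ((((τ : ℤ) - 1) * κ + 1) * x' - (κ : ℤ) * (x + ∑ i, l i) - (∑ j, xs j) + (κ : ℤ) - 1 ≥ 0 ∧
      -(κ : ℤ) * x' + (κ : ℤ) * (x + ∑ i, l i) + ∑ j, xs j ≥ 0) ↔
      (x' = 1 ↔ (x = 1 ∨ (∃ i, l i = 1) ∨ ∀ j, xs j = 1)) := by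
  set L := ∑ i, l i with hL
  set T := ∑ j, xs j with hT
  have hL0 : 0 ≤ L := sum01_nonneg l hl
  have hLle : L ≤ ((τ - 2 : ℕ) : ℤ) := sum01_le l hl
  have hT0 : 0 ≤ T := sum01_nonneg xs hxs
  have hTle : T ≤ (κ : ℤ) := sum01_le xs hxs
  have hLpos : 1 ≤ L ↔ ∃ i, l i = 1 := sum01_pos_iff l hl
  have hTall : (κ:ℤ) ≤ T ↔ ∀ j, xs j = 1 := sum01_eq_card_iff xs hxs
  have hτ' : ((τ - 2 : ℕ) : ℤ) = (τ:ℤ) - 2 := by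
    push_cast [Nat.cast_sub hτ]; ring
  have hκ' : (1:ℤ) ≤ (κ:ℤ) := by exact_mod_cast hκ
  have hτ2 : (2:ℤ) ≤ (τ:ℤ) := by exact_mod_cast hτ
  rw [hτ'] at hLle
  constructor
  · rintro ⟨h1, h2⟩
    constructor
    · intro hx1
      subst hx1
      -- κ ≤ κ*(x+L) + T
      by_contra hc
      push_neg at hc
      obtain ⟨hxne, hlne, hxsne⟩ := hc
      have hx0 : x = 0 := by rcases hx with h|h; exact h; exact absurd h hxne
      have hLz : L = 0 := by
        by_contra h
        obtain ⟨i, hi⟩ := hLpos.mp (by omega)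
        exact hlne i hi
      have hTlt : T < (κ:ℤ) := by
        rcases lt_or_ge T (κ:ℤ) with h|h
        · exact h
        · obtain ⟨j, hj⟩ := hxsne
          exact absurd (hTall.mp h j) hj
      rw [hx0, hLz] at h2
      simp at h2
      omega
    · intro hr
      rcases hx' with h0|h1'
      · exfalso
        rw [h0] at h1
        -- h1: -κ*(x+L) - T + κ - 1 ≥ 0, i.e. κ*(x+L)+T ≤ κ-1
        rcases hr with hx1 | ⟨i, hi⟩ | hall
        · rw [hx1] at h1; nlinarith
        · have : 1 ≤ L := hLpos.mpr ⟨i, hi⟩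
          rcases hx with h|h <;> rw [h] at h1 <;> nlinarith
        · have : (κ:ℤ) ≤ T := hTall.mpr hall
          rcases hx with h|h <;> rw [h] at h1 <;> nlinarith
      · exact h1'
  · intro hiff
    rcases hx' with h0|h1'
    · have hnot := (hiff.symm).not.mpr (by omega)
      push_neg at hnot
      obtain ⟨hxne, hlne, hxsne⟩ := hnot
      have hx0 : x = 0 := by rcases hx with h|h; exact h; exact absurd h hxne
      have hLz : L = 0 := by
        by_contra h
        obtain ⟨i, hi⟩ := hLpos.mp (by omega)
        exact hlne i hi
      have hTlt : T < (κ:ℤ) := by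
        rcases lt_or_ge T (κ:ℤ) with h|h
        · exact h
        · obtain ⟨j, hj⟩ := hxsne
          exact absurd (hTall.mp h j) hj
      rw [h0, hx0, hLz]
      constructor <;> simp <;> omega
    · have hr := hiff.mp h1'
      rw [h1']
      have hge : (κ:ℤ) ≤ (κ:ℤ) * (x + L) + T := by
        rcases hr with hx1 | ⟨i, hi⟩ | hall
        · rw [hx1]; nlinarith
        · have h1L : 1 ≤ L := hLpos.mpr ⟨i, hi⟩
          rcases hx with h|h <;> rw [h] <;> nlinarith
        · have : (κ:ℤ) ≤ T := hTall.mpr hall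
          rcases hx with h|h <;> rw [h] <;> nlinarith
      constructor
      · have hxL : x + L ≤ (τ:ℤ) - 1 := by rcases hx with h|h <;> omega
        nlinarith
      · nlinarith
end

section
/- For 0/1 integers x', x, x_1, ..., x_κ (the τ = 2 case of Theorem 3 with no intermediate path variables), the inequalities (κ+1)·x' − κ·x − Σ x_i + κ − 1 ≥ 0 and −κ·x' + κ·x + Σ x_i ≥ 0 hold iff (x' = 1 ↔ (x = 1 or all x_i = 1)). -/
theorem stmt_13 (κ : ℕ) (hκ : 1 ≤ κ) (x' x : ℤ) (xs : Fin κ → ℤ)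
    (hx' : x' = 0 ∨ x' = 1) (hx : x = 0 ∨ x = 1)
    (hxs : ∀ j, xs j = 0 ∨ xs j = 1) :
    (((κ : ℤ) + 1) * x' - (κ : ℤ) * x - (∑ j, xs j) + (κ : ℤ) - 1 ≥ 0 ∧
      -(κ : ℤ) * x' + (κ : ℤ) * x + ∑ j, xs j ≥ 0) ↔
      (x' = 1 ↔ (x = 1 ∨ ∀ j, xs j = 1)) := by
  have hS0 : 0 ≤ ∑ j, xs j :=
    Finset.sum_nonneg fun j _ => by rcases hxs j with h | h <;> omega
  have hS1 : ∑ j, xs j ≤ (κ : ℤ) := by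
    calc ∑ j, xs j ≤ ∑ _j : Fin κ, (1 : ℤ) :=
          Finset.sum_le_sum fun j _ => by rcases hxs j with h | h <;> omega
      _ = κ := by simp
  have hall : (∀ j, xs j = 1) ↔ ∑ j, xs j = (κ : ℤ) := by
    constructor
    · intro h; simp [h]
    · intro h j
      by_contra hj
      have hj0 : xs j = 0 := by rcases hxs j with h' | h' <;> tauto
      have : ∑ i, xs i ≤ ∑ i, (if i = j then 0 else (1 : ℤ)) :=
        Finset.sum_le_sum fun i _ => by
          by_cases hij : i = j
          · simp [hij, hj0]
          · rcases hxs i with h' | h' <;> simp [hij] <;> omega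
      have heq : ∀ i : Fin κ, (if i = j then (0:ℤ) else 1) = 1 - (if i = j then 1 else 0) := by
        intro i; split <;> ring
      simp only [heq, Finset.sum_sub_distrib, Finset.sum_const, Finset.card_univ,
        Fintype.card_fin, Finset.sum_ite_eq', Finset.mem_univ, if_true, nsmul_eq_mul, smul_eq_mul,
        mul_one] at this
      omega
  rw [hall]
  rcases hx' with h1 | h1 <;> rcases hx with h2 | h2 <;> subst h1 <;> subst h2 <;>
    simp only [mul_zero, mul_one] <;>
    first | omega | (simp only [true_or, or_true, true_iff, iff_true]; omega)
end

section
/- Elimination of a two-variable symmetric rule preserves the minimum: in a deduction system containing a symmetric rule [x_1, x_2] (x_1 known iff x_2 deducible and vice versa), identifying x_2 with x_1 and deleting the rule yields a system whose minimum number of initial propositions needed to deduce everything equals that of the original system. -/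
/-- Deduction closure of `S` under a rule set `R`. -/
inductive Closure {P : Type*} (R : Set (Set P × P)) (S : Set P) : P → Prop
  | mem {p} : p ∈ S → Closure R S p
  | rule {r} : r ∈ R → (∀ q ∈ r.1, Closure R S q) → Closure R S r.2

private theorem cl12 {P : Type*} {x₁ x₂ : P} {R : Set (Set P × P)} {S : Set P}
    (h : Closure (R ∪ {({x₁}, x₂), ({x₂}, x₁)}) S x₁) :
    Closure (R ∪ {({x₁}, x₂), ({x₂}, x₁)}) S x₂ :=
  Closure.rule (r := ({x₁}, x₂)) (by simp) (fun q hq => by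
    rw [Set.mem_singleton_iff.mp hq]; exact h)

private theorem cl21 {P : Type*} {x₁ x₂ : P} {R : Set (Set P × P)} {S : Set P}
    (h : Closure (R ∪ {({x₁}, x₂), ({x₂}, x₁)}) S x₂) :
    Closure (R ∪ {({x₁}, x₂), ({x₂}, x₁)}) S x₁ :=
  Closure.rule (r := ({x₂}, x₁)) (by simp) (fun q hq => by
    rw [Set.mem_singleton_iff.mp hq]; exact h)

private theorem swap_fwd {P : Type*} [DecidableEq P] {x₁ x₂ : P} {R : Set (Set P × P)}
    {S : Set P} (p : P) (h : Closure (R ∪ {({x₁}, x₂), ({x₂}, x₁)}) S p) :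
    Closure (R ∪ {({x₁}, x₂), ({x₂}, x₁)}) S (if p = x₂ then x₁ else p) := by
  by_cases hp : p = x₂
  · rw [if_pos hp]
    rw [hp] at h
    exact cl21 h
  · rwa [if_neg hp]

private theorem swap_bwd {P : Type*} [DecidableEq P] {x₁ x₂ : P} {R : Set (Set P × P)}
    {S : Set P} (p : P) (h : Closure (R ∪ {({x₁}, x₂), ({x₂}, x₁)}) S
      (if p = x₂ then x₁ else p)) : Closure (R ∪ {({x₁}, x₂), ({x₂}, x₁)}) S p := by
  by_cases hp : p = x₂
  · rw [if_pos hp] at h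
    rw [hp]
    exact cl12 h
  · rwa [if_neg hp] at h

private theorem quot_to_orig {P : Type*} [DecidableEq P] {x₁ x₂ : P} {R : Set (Set P × P)}
    {S : Set P} (p : P)
    (h : Closure ((fun r : Set P × P =>
        ((fun p => if p = x₂ then x₁ else p) '' r.1,
          (fun p => if p = x₂ then x₁ else p) r.2)) '' R) S p) :
    Closure (R ∪ {({x₁}, x₂), ({x₂}, x₁)}) S p := by
  induction h with
  | mem hp => exact Closure.mem hp
  | rule hr hprem ih =>
    obtain ⟨r₀, hr₀, rfl⟩ := hr
    show Closure (R ∪ {({x₁}, x₂), ({x₂}, x₁)}) S (if r₀.2 = x₂ then x₁ else r₀.2)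
    apply swap_fwd
    apply Closure.rule (Set.mem_union_left _ hr₀)
    intro q hq
    exact swap_bwd q (ih _ ⟨q, hq, rfl⟩)

private theorem orig_to_quot {P : Type*} [DecidableEq P] {x₁ x₂ : P} (hne : x₁ ≠ x₂)
    {R : Set (Set P × P)} {S : Set P} (p : P)
    (h : Closure (R ∪ {({x₁}, x₂), ({x₂}, x₁)}) S p) :
    Closure ((fun r : Set P × P =>
        ((fun p => if p = x₂ then x₁ else p) '' r.1,
          (fun p => if p = x₂ then x₁ else p) r.2)) '' R)
      ((fun p => if p = x₂ then x₁ else p) '' S) (if p = x₂ then x₁ else p) := by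
  induction h with
  | mem hp => exact Closure.mem ⟨_, hp, rfl⟩
  | @rule r hr hprem ih =>
    rcases hr with hr | hr
    · refine Closure.rule (Set.mem_image_of_mem _ hr) (fun q hq => ?_)
      have hq' : q ∈ (fun p => if p = x₂ then x₁ else p) '' r.1 := hq
      obtain ⟨q₀, hq₀, rfl⟩ := hq'
      exact ih q₀ hq₀
    · simp only [Set.mem_insert_iff, Set.mem_singleton_iff] at hr
      rcases hr with rfl | rfl
      · simpa [hne] using ih x₁ rfl
      · simpa [hne] using ih x₂ rfl

theorem stmt_15 {P : Type*} [Fintype P] [DecidableEq P] (x₁ x₂ : P) (hne : x₁ ≠ x₂)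
    (R : Set (Set P × P)) :
    -- minimum of the original system, containing the symmetric rule [x₁, x₂]
    sInf {n : ℕ | ∃ S : Finset P, S.card = n ∧
        ∀ p, Closure (R ∪ {({x₁}, x₂), ({x₂}, x₁)}) ↑S p} =
    -- minimum of the quotient system: x₂ is identified with x₁ (substitution σ)
    -- and removed, together with the rule [x₁, x₂]
    sInf {n : ℕ | ∃ S : Finset P, x₂ ∉ S ∧ S.card = n ∧
        ∀ p, p ≠ x₂ →
          Closure ((fun r : Set P × P =>
              ((fun p => if p = x₂ then x₁ else p) '' r.1,
                (fun p => if p = x₂ then x₁ else p) r.2)) '' R) ↑S p} := by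
  have hAne : {n : ℕ | ∃ S : Finset P, S.card = n ∧
      ∀ p, Closure (R ∪ {({x₁}, x₂), ({x₂}, x₁)}) ↑S p}.Nonempty :=
    ⟨(Finset.univ : Finset P).card, Finset.univ, rfl, fun p => Closure.mem (by simp)⟩
  have hBne : {n : ℕ | ∃ S : Finset P, x₂ ∉ S ∧ S.card = n ∧
      ∀ p, p ≠ x₂ → Closure ((fun r : Set P × P =>
          ((fun p => if p = x₂ then x₁ else p) '' r.1,
            (fun p => if p = x₂ then x₁ else p) r.2)) '' R) ↑S p}.Nonempty :=
    ⟨(Finset.univ.erase x₂).card, Finset.univ.erase x₂, Finset.notMem_erase _ _, rfl,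
      fun p hp => Closure.mem (by simp [hp])⟩
  apply le_antisymm
  · -- sInf A ≤ sInf B
    obtain ⟨S, hx₂S, hcard, hcl⟩ := Nat.sInf_mem hBne
    refine Nat.sInf_le ⟨S, hcard, fun p => ?_⟩
    by_cases hp : p = x₂
    · rw [hp]
      exact cl12 (quot_to_orig x₁ (hcl x₁ hne))
    · exact quot_to_orig p (hcl p hp)
  · -- sInf B ≤ sInf A
    obtain ⟨S, hcard, hcl⟩ := Nat.sInf_mem hAne
    refine le_trans (Nat.sInf_le ⟨S.image (fun p => if p = x₂ then x₁ else p), ?_, rfl, ?_⟩)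
      (by rw [← hcard]; exact Finset.card_image_le)
    · simp only [Finset.mem_image, not_exists]
      rintro a ⟨ha, hax⟩
      by_cases h : a = x₂
      · rw [if_pos h] at hax; exact hne hax
      · rw [if_neg h] at hax; exact h hax
    · intro p hp
      have := orig_to_quot hne p (hcl p)
      rw [if_neg hp] at this
      simpa [Finset.coe_image] using this
end

section
/- The 9 variables R_4, ..., R_{12} determine the full SNOW 2.0 state: in the Boolean deduction system on variables s_0,...,s_{27}, R_0,...,R_{13} with symmetric rules [s_{t+16}, s_{t+11}, s_{t+2}, s_t] for 0 ≤ t ≤ 11, [s_{t+15}, R_{t+1}, R_t, s_t] for 0 ≤ t ≤ 12, and [R_{t+2}, s_{t+5}, R_t] for 0 ≤ t ≤ 11, the deduction closure of {R_4, R_5, R_6, R_7, R_8, R_9, R_{10}, R_{11}, R_{12}} contains every variable. -/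
/-- Variables of the SNOW 2.0 deduction system with T = 13: LFSR cells `s t`
(0 ≤ t ≤ 27) and FSM registers `R t` (0 ≤ t ≤ 13). -/
inductive VS
  | s : ℕ → VS
  | R : ℕ → VS

/-- Deduction closure: symmetric rules `[s_{t+16},s_{t+11},s_{t+2},s_t]` (t ≤ 11),
`[s_{t+15},R_{t+1},R_t,s_t]` (t ≤ 12) and `[R_{t+2},s_{t+5},R_t]` (t ≤ 11);
any one member is deducible from the remaining ones. -/
inductive DedS (S : Set VS) : VS → Prop
  | mem {v} : v ∈ S → DedS S v
  | ruleA (t : ℕ) (ht : t ≤ 11) (i : Fin 4)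
      (h : ∀ j, j ≠ i → DedS S (![VS.s (t+16), VS.s (t+11), VS.s (t+2), VS.s t] j)) :
      DedS S (![VS.s (t+16), VS.s (t+11), VS.s (t+2), VS.s t] i)
  | ruleB (t : ℕ) (ht : t ≤ 12) (i : Fin 4)
      (h : ∀ j, j ≠ i → DedS S (![VS.s (t+15), VS.R (t+1), VS.R t, VS.s t] j)) :
      DedS S (![VS.s (t+15), VS.R (t+1), VS.R t, VS.s t] i)
  | ruleC (t : ℕ) (ht : t ≤ 11) (i : Fin 3)
      (h : ∀ j, j ≠ i → DedS S (![VS.R (t+2), VS.s (t+5), VS.R t] j)) :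
      DedS S (![VS.R (t+2), VS.s (t+5), VS.R t] i)

/-- The nine known registers R₄,…,R₁₂. -/
def initS : Set VS := {v | ∃ t, 4 ≤ t ∧ t ≤ 12 ∧ v = VS.R t}

variable {S : Set VS}

lemma A0 (t : ℕ) (ht : t ≤ 11) (h1 : DedS S (VS.s (t+11))) (h2 : DedS S (VS.s (t+2)))
    (h3 : DedS S (VS.s t)) : DedS S (VS.s (t+16)) :=
  DedS.ruleA t ht 0 (fun j hj => by fin_cases j <;> first | exact absurd rfl hj | assumption)

lemma A1 (t : ℕ) (ht : t ≤ 11) (h0 : DedS S (VS.s (t+16))) (h2 : DedS S (VS.s (t+2)))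
    (h3 : DedS S (VS.s t)) : DedS S (VS.s (t+11)) :=
  DedS.ruleA t ht 1 (fun j hj => by fin_cases j <;> first | exact absurd rfl hj | assumption)

lemma A3 (t : ℕ) (ht : t ≤ 11) (h0 : DedS S (VS.s (t+16))) (h1 : DedS S (VS.s (t+11)))
    (h2 : DedS S (VS.s (t+2))) : DedS S (VS.s t) :=
  DedS.ruleA t ht 3 (fun j hj => by fin_cases j <;> first | exact absurd rfl hj | assumption)

lemma B0 (t : ℕ) (ht : t ≤ 12) (h1 : DedS S (VS.R (t+1))) (h2 : DedS S (VS.R t))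
    (h3 : DedS S (VS.s t)) : DedS S (VS.s (t+15)) :=
  DedS.ruleB t ht 0 (fun j hj => by fin_cases j <;> first | exact absurd rfl hj | assumption)

lemma B3 (t : ℕ) (ht : t ≤ 12) (h0 : DedS S (VS.s (t+15))) (h1 : DedS S (VS.R (t+1)))
    (h2 : DedS S (VS.R t)) : DedS S (VS.s t) :=
  DedS.ruleB t ht 3 (fun j hj => by fin_cases j <;> first | exact absurd rfl hj | assumption)

lemma C0 (t : ℕ) (ht : t ≤ 11) (h1 : DedS S (VS.s (t+5))) (h2 : DedS S (VS.R t)) :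
    DedS S (VS.R (t+2)) :=
  DedS.ruleC t ht 0 (fun j hj => by fin_cases j <;> first | exact absurd rfl hj | assumption)

lemma C1 (t : ℕ) (ht : t ≤ 11) (h0 : DedS S (VS.R (t+2))) (h2 : DedS S (VS.R t)) :
    DedS S (VS.s (t+5)) :=
  DedS.ruleC t ht 1 (fun j hj => by fin_cases j <;> first | exact absurd rfl hj | assumption)

lemma C2 (t : ℕ) (ht : t ≤ 11) (h0 : DedS S (VS.R (t+2))) (h1 : DedS S (VS.s (t+5))) :
    DedS S (VS.R t) :=
  DedS.ruleC t ht 2 (fun j hj => by fin_cases j <;> first | exact absurd rfl hj | assumption)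

theorem stmt_17 :
    (∀ t ≤ 27, DedS initS (VS.s t)) ∧ (∀ t ≤ 13, DedS initS (VS.R t)) := by
  have hR : ∀ t, 4 ≤ t → t ≤ 12 → DedS initS (VS.R t) :=
    fun t h1 h2 => DedS.mem ⟨t, h1, h2, rfl⟩
  have r4 := hR 4 (by norm_num) (by norm_num)
  have r5 := hR 5 (by norm_num) (by norm_num)
  have r6 := hR 6 (by norm_num) (by norm_num)
  have r7 := hR 7 (by norm_num) (by norm_num)
  have r8 := hR 8 (by norm_num) (by norm_num)
  have r9 := hR 9 (by norm_num) (by norm_num)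
  have r10 := hR 10 (by norm_num) (by norm_num)
  have r11 := hR 11 (by norm_num) (by norm_num)
  have r12 := hR 12 (by norm_num) (by norm_num)
  have s9 : DedS initS (VS.s 9) := C1 4 (by norm_num) r6 r4
  have s10 : DedS initS (VS.s 10) := C1 5 (by norm_num) r7 r5
  have s11 : DedS initS (VS.s 11) := C1 6 (by norm_num) r8 r6
  have s12 : DedS initS (VS.s 12) := C1 7 (by norm_num) r9 r7
  have s13 : DedS initS (VS.s 13) := C1 8 (by norm_num) r10 r8
  have s14 : DedS initS (VS.s 14) := C1 9 (by norm_num) r11 r9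
  have s15 : DedS initS (VS.s 15) := C1 10 (by norm_num) r12 r10
  have s24 : DedS initS (VS.s 24) := B0 9 (by norm_num) r10 r9 s9
  have s25 : DedS initS (VS.s 25) := B0 10 (by norm_num) r11 r10 s10
  have s26 : DedS initS (VS.s 26) := B0 11 (by norm_num) r12 r11 s11
  have s20 : DedS initS (VS.s 20) := A1 9 (by norm_num) s25 s11 s9
  have s21 : DedS initS (VS.s 21) := A1 10 (by norm_num) s26 s12 s10
  have s5 : DedS initS (VS.s 5) := B3 5 (by norm_num) s20 r6 r5
  have s6 : DedS initS (VS.s 6) := B3 6 (by norm_num) s21 r7 r6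
  have s4 : DedS initS (VS.s 4) := A3 4 (by norm_num) s20 s15 s6
  have s19 : DedS initS (VS.s 19) := B0 4 (by norm_num) r5 r4 s4
  have s8 : DedS initS (VS.s 8) := A3 8 (by norm_num) s24 s19 s10
  have s23 : DedS initS (VS.s 23) := B0 8 (by norm_num) r9 r8 s8
  have r3 : DedS initS (VS.R 3) := C2 3 (by norm_num) r5 s8
  have r1 : DedS initS (VS.R 1) := C2 1 (by norm_num) r3 s6
  have s3 : DedS initS (VS.s 3) := A3 3 (by norm_num) s19 s14 s5
  have s18 : DedS initS (VS.s 18) := B0 3 (by norm_num) r4 r3 s3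
  have s2 : DedS initS (VS.s 2) := A3 2 (by norm_num) s18 s13 s4
  have s7 : DedS initS (VS.s 7) := A3 7 (by norm_num) s23 s18 s9
  have s22 : DedS initS (VS.s 22) := B0 7 (by norm_num) r8 r7 s7
  have r2 : DedS initS (VS.R 2) := C2 2 (by norm_num) r4 s7
  have r0 : DedS initS (VS.R 0) := C2 0 (by norm_num) r2 s5
  have s0 : DedS initS (VS.s 0) := B3 0 (by norm_num) s15 r1 r0
  have s16 : DedS initS (VS.s 16) := A0 0 (by norm_num) s11 s2 s0
  have s1 : DedS initS (VS.s 1) := B3 1 (by norm_num) s16 r2 r1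
  have s17 : DedS initS (VS.s 17) := A0 1 (by norm_num) s12 s3 s1
  have r13 : DedS initS (VS.R 13) := C0 11 (by norm_num) s16 r11
  have s27 : DedS initS (VS.s 27) := B0 12 (by norm_num) r13 r12 s12
  constructor
  · intro t ht
    interval_cases t <;> assumption
  · intro t ht
    interval_cases t <;> assumption
end
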